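/- Let f be C^1 on (0,1) with f' < 0 and x·f'(x) = (1-x)·f'(1-x), let d(x,y) = y·(f(x)-f(y)) + (1-y)·(f(1-x)-f(1-y)), let θ₀ ∈ (0,1), and let π be a Borel probability measure on (0,1) charging every neighborhood of θ₀. Then for i.i.d. Bernoulli(θ₀) observations with sample mean θ̄ₙ, the generalized posterior πₙ(A) = ∫_A e^{-n d(t,θ̄ₙ)} dπ(t) / ∫_{(0,1)} e^{-n d(t,θ̄ₙ)} dπ(t) satisfies πₙ((θ₀-ε, θ₀+ε)) → 1 almost surely for every ε > 0. -/

import Mathlib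

set_option maxHeartbeats 1000000

open MeasureTheory Set Filter

lemma d_hasDerivAt (f f' : ℝ → ℝ) (hderiv : ∀ x ∈ Ioo (0:ℝ) 1, HasDerivAt f (f' x) x)
    (d : ℝ → ℝ → ℝ)
    (hd : ∀ x y, d x y = y * (f x - f y) + (1 - y) * (f (1 - x) - f (1 - y)))
    (y : ℝ) {t : ℝ} (ht : t ∈ Ioo (0:ℝ) 1) :
    HasDerivAt (fun t => d t y) (y * f' t - (1 - y) * f' (1 - t)) t := by
  have h1 : HasDerivAt f (f' t) t := hderiv t ht
  have ht' : (1:ℝ) - t ∈ Ioo (0:ℝ) 1 := ⟨by linarith [ht.2], by linarith [ht.1]⟩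
  have h2 : HasDerivAt (fun s : ℝ => f (1 - s)) (f' (1 - t) * (0 - 1)) t := by
    exact (hderiv (1 - t) ht').comp t ((hasDerivAt_const t (1:ℝ)).sub (hasDerivAt_id t))
  have h3 : HasDerivAt (fun s => y * (f s - f y) + (1 - y) * (f (1 - s) - f (1 - y)))
      (y * f' t + (1 - y) * (f' (1 - t) * (0 - 1))) t :=
    ((h1.sub_const (f y)).const_mul y).add ((h2.sub_const (f (1 - y))).const_mul (1 - y))
  have he : (fun t => d t y)
      = fun s => y * (f s - f y) + (1 - y) * (f (1 - s) - f (1 - y)) :=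
    funext fun s => hd s y
  rw [he]
  convert h3 using 1
  ring

lemma d_deriv_neg (f f' : ℝ → ℝ) (hneg : ∀ x ∈ Ioo (0:ℝ) 1, f' x < 0)
    (hfe : ∀ x ∈ Ioo (0:ℝ) 1, x * f' x = (1 - x) * f' (1 - x))
    {y t : ℝ} (hy : y ∈ Ioo (0:ℝ) 1) (ht : t ∈ Ioo (0:ℝ) 1) (hty : t < y) :
    y * f' t - (1 - y) * f' (1 - t) < 0 := by
  have ht' : (1:ℝ) - t ∈ Ioo (0:ℝ) 1 := ⟨by linarith [ht.2], by linarith [ht.1]⟩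
  have h1 := hneg t ht
  have h2 := hneg _ ht'
  have h3 := hfe t ht
  have h4 : (0:ℝ) < 1 - t := by linarith [ht.2]
  nlinarith [mul_pos (sub_pos.mpr hty) (neg_pos.mpr h1)]

lemma d_deriv_pos (f f' : ℝ → ℝ) (hneg : ∀ x ∈ Ioo (0:ℝ) 1, f' x < 0)
    (hfe : ∀ x ∈ Ioo (0:ℝ) 1, x * f' x = (1 - x) * f' (1 - x))
    {y t : ℝ} (hy : y ∈ Ioo (0:ℝ) 1) (ht : t ∈ Ioo (0:ℝ) 1) (hty : y < t) :
    0 < y * f' t - (1 - y) * f' (1 - t) := by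
  have ht' : (1:ℝ) - t ∈ Ioo (0:ℝ) 1 := ⟨by linarith [ht.2], by linarith [ht.1]⟩
  have h1 := hneg t ht
  have h2 := hneg _ ht'
  have h3 := hfe t ht
  have h4 : (0:ℝ) < 1 - t := by linarith [ht.2]
  nlinarith [mul_pos (sub_pos.mpr hty) (neg_pos.mpr h1)]

lemma d_strictAntiOn (f f' : ℝ → ℝ) (hderiv : ∀ x ∈ Ioo (0:ℝ) 1, HasDerivAt f (f' x) x)
    (hneg : ∀ x ∈ Ioo (0:ℝ) 1, f' x < 0)
    (hfe : ∀ x ∈ Ioo (0:ℝ) 1, x * f' x = (1 - x) * f' (1 - x))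
    (d : ℝ → ℝ → ℝ)
    (hd : ∀ x y, d x y = y * (f x - f y) + (1 - y) * (f (1 - x) - f (1 - y)))
    {y : ℝ} (hy : y ∈ Ioo (0:ℝ) 1) :
    StrictAntiOn (fun t => d t y) (Ioc (0:ℝ) y) := by
  apply strictAntiOn_of_deriv_neg (convex_Ioc 0 y)
  · intro x hx
    have hx1 : x ∈ Ioo (0:ℝ) 1 := ⟨hx.1, lt_of_le_of_lt hx.2 hy.2⟩
    exact (d_hasDerivAt f f' hderiv d hd y hx1).continuousAt.continuousWithinAt
  · intro x hx
    rw [interior_Ioc] at hx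
    have hx1 : x ∈ Ioo (0:ℝ) 1 := ⟨hx.1, hx.2.trans hy.2⟩
    rw [(d_hasDerivAt f f' hderiv d hd y hx1).deriv]
    exact d_deriv_neg f f' hneg hfe hy hx1 hx.2

lemma d_strictMonoOn (f f' : ℝ → ℝ) (hderiv : ∀ x ∈ Ioo (0:ℝ) 1, HasDerivAt f (f' x) x)
    (hneg : ∀ x ∈ Ioo (0:ℝ) 1, f' x < 0)
    (hfe : ∀ x ∈ Ioo (0:ℝ) 1, x * f' x = (1 - x) * f' (1 - x))
    (d : ℝ → ℝ → ℝ)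
    (hd : ∀ x y, d x y = y * (f x - f y) + (1 - y) * (f (1 - x) - f (1 - y)))
    {y : ℝ} (hy : y ∈ Ioo (0:ℝ) 1) :
    StrictMonoOn (fun t => d t y) (Ico y 1) := by
  apply strictMonoOn_of_deriv_pos (convex_Ico y 1)
  · intro x hx
    have hx1 : x ∈ Ioo (0:ℝ) 1 := ⟨lt_of_lt_of_le hy.1 hx.1, hx.2⟩
    exact (d_hasDerivAt f f' hderiv d hd y hx1).continuousAt.continuousWithinAt
  · intro x hx
    rw [interior_Ico] at hx
    have hx1 : x ∈ Ioo (0:ℝ) 1 := ⟨hy.1.trans hx.1, hx.2⟩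
    rw [(d_hasDerivAt f f' hderiv d hd y hx1).deriv]
    exact d_deriv_pos f f' hneg hfe hy hx1 hx.1

lemma d_self (f : ℝ → ℝ) (d : ℝ → ℝ → ℝ)
    (hd : ∀ x y, d x y = y * (f x - f y) + (1 - y) * (f (1 - x) - f (1 - y)))
    (y : ℝ) : d y y = 0 := by rw [hd]; ring

lemma d_nonneg (f f' : ℝ → ℝ) (hderiv : ∀ x ∈ Ioo (0:ℝ) 1, HasDerivAt f (f' x) x)
    (hneg : ∀ x ∈ Ioo (0:ℝ) 1, f' x < 0)
    (hfe : ∀ x ∈ Ioo (0:ℝ) 1, x * f' x = (1 - x) * f' (1 - x))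
    (d : ℝ → ℝ → ℝ)
    (hd : ∀ x y, d x y = y * (f x - f y) + (1 - y) * (f (1 - x) - f (1 - y)))
    {y t : ℝ} (hy : y ∈ Ioo (0:ℝ) 1) (ht : t ∈ Ioo (0:ℝ) 1) : 0 ≤ d t y := by
  rcases lt_trichotomy t y with h | h | h
  · have := (d_strictAntiOn f f' hderiv hneg hfe d hd hy)
      ⟨ht.1, h.le⟩ ⟨hy.1, le_refl y⟩ h
    simp only [d_self f d hd] at this
    exact this.le
  · rw [h, d_self f d hd]
  · have := (d_strictMonoOn f f' hderiv hneg hfe d hd hy)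
      ⟨le_refl y, hy.2⟩ ⟨h.le, ht.2⟩ h
    simp only [d_self f d hd] at this
    exact this.le

lemma det_main (θ₀ : ℝ) (hθ₀ : θ₀ ∈ Ioo (0:ℝ) 1)
    (π : Measure ℝ) [IsProbabilityMeasure π] (hπsupp : π (Set.Ioo (0:ℝ) 1)ᶜ = 0)
    (hcharge : ∀ ε > 0, 0 < π (Set.Ioo (θ₀ - ε) (θ₀ + ε)))
    (f f' : ℝ → ℝ)
    (hderiv : ∀ x ∈ Ioo (0:ℝ) 1, HasDerivAt f (f' x) x)
    (hneg : ∀ x ∈ Ioo (0:ℝ) 1, f' x < 0)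
    (hfe : ∀ x ∈ Ioo (0:ℝ) 1, x * f' x = (1 - x) * f' (1 - x))
    (d : ℝ → ℝ → ℝ)
    (hd : ∀ x y, d x y = y * (f x - f y) + (1 - y) * (f (1 - x) - f (1 - y)))
    (y : ℕ → ℝ) (hy : Tendsto y atTop (nhds θ₀))
    (ε : ℝ) (hε : 0 < ε) :
    Tendsto (fun n : ℕ => (∫ t in Set.Ioo (θ₀ - ε) (θ₀ + ε),
        Real.exp (-(n : ℝ) * d t (y n)) ∂π) /
      (∫ t in Set.Ioo (0:ℝ) 1, Real.exp (-(n : ℝ) * d t (y n)) ∂π)) atTop (nhds 1) := by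
  obtain ⟨hθ₀0, hθ₀1⟩ := hθ₀
  set ε₁ : ℝ := min ε (min θ₀ (1 - θ₀)) / 2 with hε₁def
  have hε₁ : 0 < ε₁ := by
    have : 0 < min ε (min θ₀ (1 - θ₀)) := lt_min hε (lt_min hθ₀0 (by linarith))
    positivity
  have hε₁ε : ε₁ ≤ ε := by
    have h1 : min ε (min θ₀ (1 - θ₀)) ≤ ε := min_le_left _ _
    rw [hε₁def]; linarith
  have hε₁θ : ε₁ < θ₀ := by
    have h1 : min ε (min θ₀ (1 - θ₀)) ≤ θ₀ := (min_le_right _ _).trans (min_le_left _ _)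
    rw [hε₁def]; linarith
  have hε₁θ' : ε₁ < 1 - θ₀ := by
    have h1 : min ε (min θ₀ (1 - θ₀)) ≤ 1 - θ₀ := (min_le_right _ _).trans (min_le_right _ _)
    rw [hε₁def]; linarith
  set a : ℝ := θ₀ - ε₁ with hadef
  set b : ℝ := θ₀ + ε₁ with hbdef
  have ha : a ∈ Ioo (0:ℝ) 1 := ⟨by rw [hadef]; linarith, by rw [hadef]; linarith⟩
  have hb : b ∈ Ioo (0:ℝ) 1 := ⟨by rw [hbdef]; linarith, by rw [hbdef]; linarith⟩
  have hab : a < θ₀ ∧ θ₀ < b := ⟨by rw [hadef]; linarith, by rw [hbdef]; linarith⟩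
  have hθmem : θ₀ ∈ Ioo (0:ℝ) 1 := ⟨hθ₀0, hθ₀1⟩
  have hda : 0 < d a θ₀ := by
    have := d_strictAntiOn f f' hderiv hneg hfe d hd hθmem
      ⟨ha.1, hab.1.le⟩ ⟨hθ₀0, le_refl θ₀⟩ hab.1
    simpa [d_self f d hd] using this
  have hdb : 0 < d b θ₀ := by
    have := d_strictMonoOn f f' hderiv hneg hfe d hd hθmem
      ⟨le_refl θ₀, hθ₀1⟩ ⟨hab.2.le, hb.2⟩ hab.2
    simpa [d_self f d hd] using this
  set δ : ℝ := min (d a θ₀) (d b θ₀) with hδdef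
  have hδ : 0 < δ := lt_min hda hdb
  have hδa : δ ≤ d a θ₀ := min_le_left _ _
  have hδb : δ ≤ d b θ₀ := min_le_right _ _
  -- continuity facts
  have cf : ∀ x ∈ Ioo (0:ℝ) 1, ContinuousAt f x := fun x hx => (hderiv x hx).continuousAt
  have hmem' : (1:ℝ) - θ₀ ∈ Ioo (0:ℝ) 1 := ⟨by linarith, by linarith⟩
  have cd2 : ContinuousAt (fun p : ℝ × ℝ => d p.1 p.2) (θ₀, θ₀) := by
    have he : (fun p : ℝ × ℝ => d p.1 p.2)
        = fun p : ℝ × ℝ => p.2 * (f p.1 - f p.2) + (1 - p.2) * (f (1 - p.1) - f (1 - p.2)) :=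
      funext fun p => hd p.1 p.2
    rw [he]
    have c1 : ContinuousAt (fun p : ℝ × ℝ => f p.1) (θ₀, θ₀) :=
      (cf θ₀ hθmem).comp continuousAt_fst
    have c2 : ContinuousAt (fun p : ℝ × ℝ => f p.2) (θ₀, θ₀) :=
      (cf θ₀ hθmem).comp continuousAt_snd
    have c3 : ContinuousAt (fun p : ℝ × ℝ => f (1 - p.1)) (θ₀, θ₀) :=
      ContinuousAt.comp (f := fun p : ℝ × ℝ => 1 - p.1) (g := f) (x := (θ₀, θ₀))
        (cf _ hmem') (continuousAt_const.sub continuousAt_fst)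
    have c4 : ContinuousAt (fun p : ℝ × ℝ => f (1 - p.2)) (θ₀, θ₀) :=
      ContinuousAt.comp (f := fun p : ℝ × ℝ => 1 - p.2) (g := f) (x := (θ₀, θ₀))
        (cf _ hmem') (continuousAt_const.sub continuousAt_snd)
    exact (continuousAt_snd.mul (c1.sub c2)).add
      ((continuousAt_const.sub continuousAt_snd).mul (c3.sub c4))
  have hdθθ : d θ₀ θ₀ = 0 := d_self f d hd θ₀
  obtain ⟨η₁, hη₁pos, hη₁⟩ := Metric.continuousAt_iff.mp cd2 (δ/4) (by positivity)
  have key2 : ∀ t y', |t - θ₀| < η₁ → |y' - θ₀| < η₁ → d t y' < δ/4 := by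
    intro t y' h1 h2
    have hdist : dist (t, y') (θ₀, θ₀) < η₁ := by
      rw [Prod.dist_eq]
      simp only [Real.dist_eq]
      exact max_lt h1 h2
    have := hη₁ hdist
    rw [hdθθ, Real.dist_eq, sub_zero] at this
    calc d t y' ≤ |d t y'| := le_abs_self _
      _ < δ/4 := this
  have cdy : ∀ x : ℝ, ContinuousAt (fun y' => d x y') θ₀ := by
    intro x
    have he : (fun y' => d x y')
        = fun y' => y' * (f x - f y') + (1 - y') * (f (1 - x) - f (1 - y')) :=
      funext fun y' => hd x y'
    rw [he]
    have c2 : ContinuousAt (fun y' : ℝ => f y') θ₀ := cf θ₀ hθmem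
    have c4 : ContinuousAt (fun y' : ℝ => f (1 - y')) θ₀ :=
      ContinuousAt.comp (f := fun y' : ℝ => 1 - y') (g := f) (x := θ₀)
        (cf _ hmem') (continuousAt_const.sub continuousAt_id)
    exact (continuousAt_id.mul (continuousAt_const.sub c2)).add
      ((continuousAt_const.sub continuousAt_id).mul (continuousAt_const.sub c4))
  have hev1 : ∀ᶠ n in atTop, δ/2 < d a (y n) := by
    have hlt : δ/2 < d a θ₀ := by linarith
    exact ((cdy a).tendsto.comp hy).eventually (eventually_gt_nhds hlt)
  have hev2 : ∀ᶠ n in atTop, δ/2 < d b (y n) := by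
    have hlt : δ/2 < d b θ₀ := by linarith
    exact ((cdy b).tendsto.comp hy).eventually (eventually_gt_nhds hlt)
  set η : ℝ := min η₁ ε₁ with hηdef
  have hη : 0 < η := lt_min hη₁pos hε₁
  have hηη₁ : η ≤ η₁ := min_le_left _ _
  have hηε₁ : η ≤ ε₁ := min_le_right _ _
  have hev3 : ∀ᶠ n in atTop, |y n - θ₀| < η := by
    have := hy (Metric.ball_mem_nhds θ₀ hη)
    rw [mem_map] at this
    filter_upwards [this] with n hn
    simpa [Real.dist_eq] using hn
  set c : ℝ := (π (Set.Ioo (θ₀ - η) (θ₀ + η))).toReal with hcdef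
  have hc : 0 < c := ENNReal.toReal_pos (hcharge η hη).ne' (measure_ne_top π _)
  set r : ℝ := Real.exp (-(δ/4)) with hrdef
  have hr0 : 0 ≤ r := (Real.exp_pos _).le
  have hr1 : r < 1 := by rw [hrdef]; exact Real.exp_lt_one_iff.mpr (by linarith)
  have hlow : Tendsto (fun n : ℕ => 1 - (1/c) * r ^ n) atTop (nhds 1) := by
    have h1 := (tendsto_pow_atTop_nhds_zero_of_lt_one hr0 hr1).const_mul (1/c)
    have h2 : Tendsto (fun n : ℕ => 1 - (1/c) * r ^ n) atTop (nhds (1 - (1/c) * 0)) :=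
      tendsto_const_nhds.sub h1
    simpa using h2
  -- subsets
  have hsub1 : Set.Ioo a b ⊆ Set.Ioo (0:ℝ) 1 := Ioo_subset_Ioo ha.1.le hb.2.le
  have hsub2 : Set.Ioo a b ⊆ Set.Ioo (θ₀ - ε) (θ₀ + ε) :=
    Ioo_subset_Ioo (by rw [hadef]; linarith) (by rw [hbdef]; linarith)
  have hsubB : Set.Ioo (θ₀ - η) (θ₀ + η) ⊆ Set.Ioo a b :=
    Ioo_subset_Ioo (by rw [hadef]; linarith) (by rw [hbdef]; linarith)
  -- restriction congruence
  have hS : ∀ᵐ x ∂π, x ∈ Set.Ioo (0:ℝ) 1 := by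
    have hc' : {x : ℝ | ¬ x ∈ Set.Ioo (0:ℝ) 1} = (Set.Ioo (0:ℝ) 1)ᶜ := rfl
    rw [ae_iff, hc']; exact hπsupp
  have hresA : π.restrict (Set.Ioo (θ₀ - ε) (θ₀ + ε))
      = π.restrict (Set.Ioo (θ₀ - ε) (θ₀ + ε) ∩ Set.Ioo (0:ℝ) 1) := by
    apply Measure.restrict_congr_set
    rw [eventuallyEq_set]
    filter_upwards [hS] with x hx
    simp [hx]
  -- the sandwich, eventually
  have hboth : ∀ᶠ n : ℕ in atTop,
      1 - (1/c) * r ^ n ≤ (∫ t in Set.Ioo (θ₀ - ε) (θ₀ + ε),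
          Real.exp (-(n : ℝ) * d t (y n)) ∂π) /
        (∫ t in Set.Ioo (0:ℝ) 1, Real.exp (-(n : ℝ) * d t (y n)) ∂π) ∧
      (∫ t in Set.Ioo (θ₀ - ε) (θ₀ + ε), Real.exp (-(n : ℝ) * d t (y n)) ∂π) /
        (∫ t in Set.Ioo (0:ℝ) 1, Real.exp (-(n : ℝ) * d t (y n)) ∂π) ≤ 1 := by
    filter_upwards [hev1, hev2, hev3] with n h1 h2 h3
    obtain ⟨h3a, h3b⟩ := abs_lt.mp h3
    set g : ℝ → ℝ := fun t => Real.exp (-(n : ℝ) * d t (y n)) with hgdef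
    have hyn : y n ∈ Ioo (0:ℝ) 1 := by
      constructor
      · have := ha.1; rw [hadef] at this; linarith
      · have := hb.2; rw [hbdef] at this; linarith
    have hayn : a < y n := by rw [hadef]; linarith
    have hbyn : y n < b := by rw [hbdef]; linarith
    have hn0 : (0:ℝ) ≤ (n : ℝ) := Nat.cast_nonneg n
    have hg0 : ∀ t, 0 ≤ g t := fun t => (Real.exp_pos _).le
    have hcontg : ContinuousOn g (Set.Ioo (0:ℝ) 1) := by
      apply Real.continuous_exp.comp_continuousOn
      exact continuousOn_const.mul (fun x hx =>
        (d_hasDerivAt f f' hderiv d hd (y n) hx).continuousAt.continuousWithinAt)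
    have hint : IntegrableOn g (Set.Ioo (0:ℝ) 1) π := by
      apply Integrable.mono' (integrable_const 1)
        (hcontg.aestronglyMeasurable measurableSet_Ioo)
      filter_upwards [ae_restrict_mem (measurableSet_Ioo (a := (0:ℝ)) (b := 1))] with t ht
      rw [Real.norm_eq_abs, abs_of_pos (Real.exp_pos _)]
      apply Real.exp_le_one_iff.mpr
      have := d_nonneg f f' hderiv hneg hfe d hd hyn ht
      nlinarith
    -- out-region bound
    have hdout : ∀ t ∈ Set.Ioo (0:ℝ) 1 \ Set.Ioo a b, δ/2 ≤ d t (y n) := by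
      rintro t ⟨htS, htA⟩
      rw [mem_Ioo, not_and_or, not_lt, not_lt] at htA
      rcases htA with h | h
      · have := ((d_strictAntiOn f f' hderiv hneg hfe d hd hyn).antitoneOn)
          (show t ∈ Ioc (0:ℝ) (y n) from ⟨htS.1, h.trans hayn.le⟩)
          (show a ∈ Ioc (0:ℝ) (y n) from ⟨ha.1, hayn.le⟩) h
        simp only at this
        linarith
      · have := ((d_strictMonoOn f f' hderiv hneg hfe d hd hyn).monotoneOn)
          (show b ∈ Ico (y n) 1 from ⟨hbyn.le, hb.2⟩)
          (show t ∈ Ico (y n) 1 from ⟨(hbyn.le.trans h), htS.2⟩) h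
        simp only at this
        linarith
    -- ball bound
    have hB : ∀ t ∈ Set.Ioo (θ₀ - η) (θ₀ + η), Real.exp (-(n : ℝ) * (δ/4)) ≤ g t := by
      intro t ht
      have h4 : d t (y n) < δ/4 := key2 t (y n)
        (by rw [abs_lt]; constructor
            · linarith [ht.1, hηη₁]
            · linarith [ht.2, hηη₁])
        (lt_of_lt_of_le h3 hηη₁)
      apply Real.exp_le_exp.mpr
      nlinarith
    -- splitting
    have hsplit : ∫ t in Set.Ioo (0:ℝ) 1, g t ∂π
        = (∫ t in Set.Ioo a b, g t ∂π)
          + ∫ t in Set.Ioo (0:ℝ) 1 \ Set.Ioo a b, g t ∂π := by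
      rw [← setIntegral_union disjoint_sdiff_self_right
        (measurableSet_Ioo.diff measurableSet_Ioo)
        (hint.mono_set hsub1) (hint.mono_set diff_subset), union_diff_cancel hsub1]
    -- denominator lower bound
    have hBle : c * Real.exp (-(n : ℝ) * (δ/4)) ≤ ∫ t in Set.Ioo (0:ℝ) 1, g t ∂π := by
      have e1 : c * Real.exp (-(n : ℝ) * (δ/4))
          = ∫ t in Set.Ioo (θ₀ - η) (θ₀ + η), Real.exp (-(n : ℝ) * (δ/4)) ∂π := by
        rw [setIntegral_const, smul_eq_mul, hcdef, measureReal_def]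
      have e2 : (∫ t in Set.Ioo (θ₀ - η) (θ₀ + η), Real.exp (-(n : ℝ) * (δ/4)) ∂π)
          ≤ ∫ t in Set.Ioo (θ₀ - η) (θ₀ + η), g t ∂π :=
        setIntegral_mono_on ((integrableOn_const_iff).mpr (Or.inr (measure_lt_top _ _)))
          (hint.mono_set (hsubB.trans hsub1)) measurableSet_Ioo hB
      have e3 : (∫ t in Set.Ioo (θ₀ - η) (θ₀ + η), g t ∂π)
          ≤ ∫ t in Set.Ioo (0:ℝ) 1, g t ∂π :=
        setIntegral_mono_set hint (ae_of_all _ hg0)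
          ((hsubB.trans hsub1).eventuallyLE)
      linarith
    have hDpos : 0 < ∫ t in Set.Ioo (0:ℝ) 1, g t ∂π :=
      lt_of_lt_of_le (by positivity) hBle
    -- out integral upper bound
    have houtle : (∫ t in Set.Ioo (0:ℝ) 1 \ Set.Ioo a b, g t ∂π)
        ≤ Real.exp (-(n : ℝ) * (δ/2)) := by
      have e1 : (∫ t in Set.Ioo (0:ℝ) 1 \ Set.Ioo a b, g t ∂π)
          ≤ ∫ t in Set.Ioo (0:ℝ) 1 \ Set.Ioo a b, Real.exp (-(n : ℝ) * (δ/2)) ∂π := by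
        apply setIntegral_mono_on (hint.mono_set diff_subset)
          ((integrableOn_const_iff).mpr (Or.inr (measure_lt_top _ _)))
          (measurableSet_Ioo.diff measurableSet_Ioo)
        intro t ht
        apply Real.exp_le_exp.mpr
        have := hdout t ht
        nlinarith
      have e2 : (∫ t in Set.Ioo (0:ℝ) 1 \ Set.Ioo a b,
          Real.exp (-(n : ℝ) * (δ/2)) ∂π)
          = (π (Set.Ioo (0:ℝ) 1 \ Set.Ioo a b)).toReal * Real.exp (-(n : ℝ) * (δ/2)) := by
        rw [setIntegral_const, smul_eq_mul, measureReal_def]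
      have e3 : (π (Set.Ioo (0:ℝ) 1 \ Set.Ioo a b)).toReal ≤ 1 := by
        have h5 : π (Set.Ioo (0:ℝ) 1 \ Set.Ioo a b) ≤ 1 := prob_le_one
        have := ENNReal.toReal_mono (by norm_num) h5
        simpa using this
      have e4 := mul_le_mul_of_nonneg_right e3 (Real.exp_pos (-(n : ℝ) * (δ/2))).le
      rw [one_mul] at e4
      linarith
    -- numerator comparison
    have e5 : (∫ t in Set.Ioo (θ₀ - ε) (θ₀ + ε), g t ∂π)
        = ∫ t in Set.Ioo (θ₀ - ε) (θ₀ + ε) ∩ Set.Ioo (0:ℝ) 1, g t ∂π := by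
      rw [hresA]
    have e6 : (∫ t in Set.Ioo a b, g t ∂π)
        ≤ ∫ t in Set.Ioo (θ₀ - ε) (θ₀ + ε) ∩ Set.Ioo (0:ℝ) 1, g t ∂π :=
      setIntegral_mono_set (hint.mono_set inter_subset_right) (ae_of_all _ hg0)
        ((subset_inter hsub2 hsub1).eventuallyLE)
    have e7 : (∫ t in Set.Ioo (θ₀ - ε) (θ₀ + ε) ∩ Set.Ioo (0:ℝ) 1, g t ∂π)
        ≤ ∫ t in Set.Ioo (0:ℝ) 1, g t ∂π :=
      setIntegral_mono_set hint (ae_of_all _ hg0) (inter_subset_right.eventuallyLE)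
    constructor
    · -- lower bound
      have hq : (∫ t in Set.Ioo (0:ℝ) 1 \ Set.Ioo a b, g t ∂π)
          / (∫ t in Set.Ioo (0:ℝ) 1, g t ∂π) ≤ (1/c) * r ^ n := by
        have h5 : (∫ t in Set.Ioo (0:ℝ) 1 \ Set.Ioo a b, g t ∂π)
            / (∫ t in Set.Ioo (0:ℝ) 1, g t ∂π)
            ≤ Real.exp (-(n : ℝ) * (δ/2)) / (c * Real.exp (-(n : ℝ) * (δ/4))) :=
          div_le_div₀ (Real.exp_pos _).le houtle (by positivity) hBle
        have h6 : Real.exp (-(n : ℝ) * (δ/2)) / (c * Real.exp (-(n : ℝ) * (δ/4)))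
            = (1/c) * r ^ n := by
          rw [hrdef, ← Real.exp_nat_mul,
            show -(n : ℝ) * (δ/2) = (n : ℝ) * -(δ/4) + -(n : ℝ) * (δ/4) by ring,
            Real.exp_add]
          rw [mul_comm c (Real.exp (-(n : ℝ) * (δ/4))), ← div_div, mul_div_assoc]
          rw [div_self (Real.exp_ne_zero _), mul_one, div_eq_mul_inv, mul_comm,
            one_div]
        linarith
      have h8 : ((∫ t in Set.Ioo (0:ℝ) 1, g t ∂π)
            - ∫ t in Set.Ioo (0:ℝ) 1 \ Set.Ioo a b, g t ∂π)
          ≤ ∫ t in Set.Ioo (θ₀ - ε) (θ₀ + ε), g t ∂π := by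
        rw [e5]; linarith [hsplit, e6]
      have h9 : ((∫ t in Set.Ioo (0:ℝ) 1, g t ∂π)
            - ∫ t in Set.Ioo (0:ℝ) 1 \ Set.Ioo a b, g t ∂π)
            / (∫ t in Set.Ioo (0:ℝ) 1, g t ∂π)
          ≤ (∫ t in Set.Ioo (θ₀ - ε) (θ₀ + ε), g t ∂π)
            / (∫ t in Set.Ioo (0:ℝ) 1, g t ∂π) :=
        (div_le_div_iff_of_pos_right hDpos).mpr h8
      rw [sub_div, div_self hDpos.ne'] at h9
      linarith
    · rw [div_le_one hDpos, e5]
      exact e7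
  exact tendsto_of_tendsto_of_tendsto_of_le_of_le' hlow tendsto_const_nhds
    (hboth.mono fun n h => h.1) (hboth.mono fun n h => h.2)

lemma bernoulli_slln {Ω : Type*} [MeasurableSpace Ω] (P : Measure Ω) [IsProbabilityMeasure P]
    (θ₀ : ℝ) (hθ₀ : θ₀ ∈ Ioo (0:ℝ) 1)
    (X : ℕ → Ω → ℝ) (hmeas : ∀ i, Measurable (X i))
    (hindep : ProbabilityTheory.iIndepFun X P)
    (hvals : ∀ i ω, X i ω = 0 ∨ X i ω = 1)
    (hlaw : ∀ i, P {ω | X i ω = 1} = ENNReal.ofReal θ₀) :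
    ∀ᵐ ω ∂P, Tendsto (fun n : ℕ => (∑ i ∈ Finset.range n, X i ω) / n) atTop (nhds θ₀) := by
  classical
  have hE : ∀ i, MeasurableSet {ω | X i ω = 1} :=
    fun i => measurableSet_eq_fun (hmeas i) measurable_const
  -- preimage computation
  have hpre : ∀ i (s : Set ℝ), MeasurableSet s → P (X i ⁻¹' s)
      = (if (1:ℝ) ∈ s then ENNReal.ofReal θ₀ else 0)
        + (if (0:ℝ) ∈ s then 1 - ENNReal.ofReal θ₀ else 0) := by
    intro i s _
    by_cases h1 : (1:ℝ) ∈ s <;> by_cases h0 : (0:ℝ) ∈ s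
    · rw [if_pos h1, if_pos h0]
      have : X i ⁻¹' s = univ := by
        ext ω; simp only [mem_preimage, mem_univ, iff_true]
        rcases hvals i ω with h | h <;> rw [h] <;> assumption
      rw [this, measure_univ]
      have hle : ENNReal.ofReal θ₀ ≤ 1 := ENNReal.ofReal_le_one.mpr hθ₀.2.le
      exact (add_tsub_cancel_of_le hle).symm
    · rw [if_pos h1, if_neg h0]
      have : X i ⁻¹' s = {ω | X i ω = 1} := by
        ext ω; simp only [mem_preimage, mem_setOf_eq]
        constructor
        · intro hs; rcases hvals i ω with h | h
          · rw [h] at hs; exact absurd hs h0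
          · exact h
        · intro h; rw [h]; exact h1
      rw [this, hlaw i, add_zero]
    · rw [if_neg h1, if_pos h0]
      have : X i ⁻¹' s = {ω | X i ω = 1}ᶜ := by
        ext ω; simp only [mem_preimage, mem_compl_iff, mem_setOf_eq]
        constructor
        · intro hs h; rw [h] at hs; exact h1 hs
        · intro h; rcases hvals i ω with h' | h'
          · rw [h']; exact h0
          · exact absurd h' h
      rw [this, measure_compl (hE i) (measure_ne_top _ _), hlaw i, measure_univ, zero_add]
    · rw [if_neg h1, if_neg h0]
      have : X i ⁻¹' s = ∅ := by
        ext ω; simp only [mem_preimage, mem_empty_iff_false, iff_false]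
        intro hs; rcases hvals i ω with h | h
        · rw [h] at hs; exact h0 hs
        · rw [h] at hs; exact h1 hs
      rw [this, measure_empty, add_zero]
  have hident : ∀ i, ProbabilityTheory.IdentDistrib (X i) (X 0) P P := by
    intro i
    refine ⟨(hmeas i).aemeasurable, (hmeas 0).aemeasurable, ?_⟩
    ext s hs
    rw [Measure.map_apply (hmeas i) hs, Measure.map_apply (hmeas 0) hs,
      hpre i s hs, hpre 0 s hs]
  have hint : Integrable (X 0) P := by
    apply Integrable.mono' (integrable_const (1:ℝ)) (hmeas 0).aestronglyMeasurable
    apply ae_of_all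
    intro ω
    rcases hvals 0 ω with h | h <;> rw [h] <;> norm_num
  have hexp : (∫ ω, X 0 ω ∂P) = θ₀ := by
    have hXind : X 0 = ({ω | X 0 ω = 1}).indicator (fun _ => (1:ℝ)) := by
      funext ω
      rcases hvals 0 ω with h | h
      · rw [h, Set.indicator_of_notMem]
        simp only [mem_setOf_eq, h]; norm_num
      · rw [h, Set.indicator_of_mem]
        simp only [mem_setOf_eq, h]
    rw [hXind, integral_indicator_const _ (hE 0), measureReal_def, hlaw 0, smul_eq_mul, mul_one,
      ENNReal.toReal_ofReal hθ₀.1.le]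
  have hslln := ProbabilityTheory.strong_law_ae_real X hint
    (fun i j hij => hindep.indepFun hij) hident
  rw [hexp] at hslln
  exact hslln


theorem generalized_posterior_consistency
    {Ω : Type*} [MeasurableSpace Ω] (P : Measure Ω) [IsProbabilityMeasure P]
    (θ₀ : ℝ) (hθ₀ : θ₀ ∈ Ioo (0:ℝ) 1)
    (X : ℕ → Ω → ℝ) (hmeas : ∀ i, Measurable (X i))
    (hindep : ProbabilityTheory.iIndepFun X P)
    (hvals : ∀ i ω, X i ω = 0 ∨ X i ω = 1)
    (hlaw : ∀ i, P {ω | X i ω = 1} = ENNReal.ofReal θ₀)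
    (π : Measure ℝ) [IsProbabilityMeasure π] (hπsupp : π (Set.Ioo (0:ℝ) 1)ᶜ = 0)
    (hcharge : ∀ ε > 0, 0 < π (Set.Ioo (θ₀ - ε) (θ₀ + ε)))
    (f f' : ℝ → ℝ)
    (hderiv : ∀ x ∈ Ioo (0:ℝ) 1, HasDerivAt f (f' x) x)
    (hcont : ContinuousOn f' (Ioo (0:ℝ) 1))
    (hneg : ∀ x ∈ Ioo (0:ℝ) 1, f' x < 0)
    (hfe : ∀ x ∈ Ioo (0:ℝ) 1, x * f' x = (1 - x) * f' (1 - x))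
    (d : ℝ → ℝ → ℝ)
    (hd : ∀ x y, d x y = y * (f x - f y) + (1 - y) * (f (1 - x) - f (1 - y)))
    (mean : ℕ → Ω → ℝ)
    (hmean : ∀ n ω, mean n ω = (∑ i ∈ Finset.range n, X i ω) / n)
    (post : ℕ → Ω → Set ℝ → ℝ)
    (hpost : ∀ n ω A, post n ω A =
      (∫ t in A, Real.exp (-(n : ℝ) * d t (mean n ω)) ∂π) /
      (∫ t in Set.Ioo (0:ℝ) 1, Real.exp (-(n : ℝ) * d t (mean n ω)) ∂π)) :
    ∀ ε > 0, ∀ᵐ ω ∂P,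
      Tendsto (fun n => post n ω (Set.Ioo (θ₀ - ε) (θ₀ + ε))) atTop (nhds 1) := by

  intro ε hε
  filter_upwards [bernoulli_slln P θ₀ hθ₀ X hmeas hindep hvals hlaw] with ω hω
  have hmw : Tendsto (fun n => mean n ω) atTop (nhds θ₀) := by
    have he : (fun n => mean n ω) = fun n : ℕ => (∑ i ∈ Finset.range n, X i ω) / n :=
      funext fun n => hmean n ω
    rw [he]; exact hω
  have hdet := det_main θ₀ hθ₀ π hπsupp hcharge f f' hderiv hneg hfe d hd
    (fun n => mean n ω) hmw ε hε
  have hpe : (fun n => post n ω (Set.Ioo (θ₀ - ε) (θ₀ + ε)))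
      = fun n : ℕ => (∫ t in Set.Ioo (θ₀ - ε) (θ₀ + ε),
          Real.exp (-(n : ℝ) * d t (mean n ω)) ∂π) /
        (∫ t in Set.Ioo (0:ℝ) 1, Real.exp (-(n : ℝ) * d t (mean n ω)) ∂π) :=
    funext fun n => hpost n ω _
  rw [hpe]
  exact hdet
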